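/- Let γ ≥ 1/2, Q(x,y) = |y|^γ, and let Ω ⊆ [a,b] × [c,d] be an open set with 0 < a < b, 0 ≤ c < d ≤ 1. Let F_t(x,y) = (x, y + t x). Then the function t ↦ ∫_{F_{−t}(Ω)} Q(z)² dz satisfies (d/dt)|_{t=0} ∫_{F_{−t}(Ω)} Q² dz ≤ −a · ∫_Ω Q² dz. -/

import Mathlib

open Real MeasureTheory

def shearHomeo (s : ℝ) : ℝ × ℝ ≃ₜ ℝ × ℝ where
  toFun z := (z.1, z.2 + s * z.1)
  invFun z := (z.1, z.2 - s * z.1)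
  left_inv z := by simp
  right_inv z := by simp
  continuous_toFun := by fun_prop
  continuous_invFun := by fun_prop

lemma shear_mp (s : ℝ) :
    MeasurePreserving (fun z : ℝ × ℝ => (z.1, z.2 + s * z.1)) volume volume := by
  rw [Measure.volume_eq_prod]
  exact (MeasurePreserving.id volume).skew_product
    (g := fun x y => y + s * x) (by fun_prop)
    (Filter.Eventually.of_forall fun x => map_add_right_eq_self volume (s * x))

lemma integral_shear_image (s : ℝ) (Ω : Set (ℝ × ℝ)) (g : ℝ × ℝ → ℝ) :
    ∫ z in (fun z : ℝ × ℝ => (z.1, z.2 + s * z.1)) '' Ω, g z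
      = ∫ z in Ω, g (z.1, z.2 + s * z.1) :=
  (shear_mp s).setIntegral_image_emb (shearHomeo s).measurableEmbedding g Ω

lemma rpow_lip (p : ℝ) (hp : 1 ≤ p) :
    LipschitzOnWith (p * 2 ^ (p - 1)).toNNReal (fun u : ℝ => u ^ p) (Set.Icc (0:ℝ) 2) := by
  apply Convex.lipschitzOnWith_of_nnnorm_hasDerivWithin_le (f' := fun u => p * u ^ (p - 1))
    (convex_Icc 0 2)
  · intro x _
    exact (Real.hasDerivAt_rpow_const (Or.inr hp)).hasDerivWithinAt
  · intro x hx
    rw [← NNReal.coe_le_coe, coe_nnnorm, Real.coe_toNNReal']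
    have h1 : x ^ (p - 1) ≤ 2 ^ (p - 1) := by
      rcases eq_or_lt_of_le hx.1 with h | h
      · rw [← h]
        exact (Real.zero_rpow_le_one _).trans (Real.one_le_rpow one_le_two (by linarith))
      · exact Real.rpow_le_rpow (le_of_lt h) hx.2 (by linarith)
    have h0 : (0:ℝ) ≤ x ^ (p - 1) := Real.rpow_nonneg hx.1 _
    have hpos : (0:ℝ) ≤ p * 2 ^ (p - 1) := by positivity
    rw [Real.norm_eq_abs, abs_of_nonneg (by positivity)]
    exact le_max_of_le_left (by nlinarith)

lemma abs_rpow_lip (p : ℝ) (hp : 1 ≤ p) :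
    LipschitzOnWith (p * 2 ^ (p - 1)).toNNReal (fun s : ℝ => |s| ^ p) (Set.Icc (-2:ℝ) 2) := by
  have habs : LipschitzOnWith 1 (fun s : ℝ => |s|) (Set.Icc (-2:ℝ) 2) := by
    have := (lipschitzWith_one_norm (E := ℝ)).lipschitzOnWith (s := Set.Icc (-2:ℝ) 2)
    rwa [show (Norm.norm : ℝ → ℝ) = fun s => |s| from funext Real.norm_eq_abs] at this
  have hmaps : Set.MapsTo (fun s : ℝ => |s|) (Set.Icc (-2:ℝ) 2) (Set.Icc (0:ℝ) 2) := by
    intro x hx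
    exact ⟨abs_nonneg x, abs_le.2 ⟨hx.1, hx.2⟩⟩
  simpa only [mul_one, Function.comp_def] using (rpow_lip p hp).comp habs hmaps

/-- decrease estimate, `γ ≥ 1/2`: with `Q(x,y) = |y|^γ`, `Ω ⊆ [a,b]×[c,d]`
open, `0 < a < b`, `0 ≤ c < d ≤ 1`, and `F_{−t}(Ω) = {(x, y − t x) : (x,y) ∈ Ω}`,
`(d/dt)|_{t=0} ∫_{F_{−t}(Ω)} Q² ≤ −a ∫_Ω Q²`. -/
theorem stmt_5 (γ a b c d : ℝ) (hγ : 1 / 2 ≤ γ) (ha : 0 < a) (hab : a < b)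
    (hc : 0 ≤ c) (hcd : c < d) (hd : d ≤ 1)
    (Ω : Set (ℝ × ℝ)) (hΩopen : IsOpen Ω) (hΩ : Ω ⊆ Set.Icc a b ×ˢ Set.Icc c d) :
    deriv (fun t : ℝ =>
        ∫ z in (fun z : ℝ × ℝ => (z.1, z.2 + (-t) * z.1)) '' Ω, (|z.2| ^ γ) ^ 2) 0
      ≤ -a * ∫ z in Ω, (|z.2| ^ γ) ^ 2 := by
  have hb : 0 < b := ha.trans hab
  set p : ℝ := 2 * γ with hpdef
  have hp : 1 ≤ p := by rw [hpdef]; linarith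
  have hQ : ∀ y : ℝ, (|y| ^ γ) ^ 2 = |y| ^ p := by
    intro y
    rw [← Real.rpow_natCast (|y| ^ γ) 2, ← Real.rpow_mul (abs_nonneg y)]
    norm_num [hpdef, mul_comm]
  have hΩm : MeasurableSet Ω := hΩopen.measurableSet
  -- all points of Ω have positive second coordinate
  have hy_pos : ∀ z ∈ Ω, 0 < z.2 := by
    intro z hz
    obtain ⟨ε, hε, hball⟩ := Metric.isOpen_iff.1 hΩopen z hz
    have hz' : (z.1, z.2 - ε / 2) ∈ Ω := by
      apply hball
      rw [Metric.mem_ball, Prod.dist_eq]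
      have h1 : dist z.1 z.1 = 0 := dist_self _
      have h2 : dist (z.2 - ε / 2) z.2 = ε / 2 := by
        rw [Real.dist_eq]
        rw [show z.2 - ε / 2 - z.2 = -(ε / 2) by ring, abs_neg, abs_of_nonneg (by linarith)]
      simp only [h1, h2]
      rw [max_eq_right (by linarith)]
      linarith
    have := (hΩ hz').2.1
    simp only at this
    linarith
  have hx_mem : ∀ z ∈ Ω, a ≤ z.1 ∧ z.1 ≤ b := fun z hz => ⟨(hΩ hz).1.1, (hΩ hz).1.2⟩
  have hy_mem : ∀ z ∈ Ω, z.2 ≤ 1 := fun z hz => le_trans (hΩ hz).2.2 hd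
  have hμΩ : volume Ω ≠ ⊤ :=
    (lt_of_le_of_lt (measure_mono hΩ) ((isCompact_Icc.prod isCompact_Icc).measure_lt_top)).ne
  -- rewrite the function of t
  have hfun : (fun t : ℝ =>
        ∫ z in (fun z : ℝ × ℝ => (z.1, z.2 + (-t) * z.1)) '' Ω, (|z.2| ^ γ) ^ 2)
      = fun t : ℝ => ∫ z in Ω, |z.2 - t * z.1| ^ p := by
    funext t
    rw [integral_shear_image]
    simp only [hQ, neg_mul, ← sub_eq_add_neg]
  rw [hfun]
  -- differentiation under the integral sign
  have hmeas : ∀ t : ℝ, AEStronglyMeasurable (fun z : ℝ × ℝ => |z.2 - t * z.1| ^ p)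
      (volume.restrict Ω) := by
    intro t
    exact (((measurable_snd.sub (measurable_fst.const_mul t)).abs).pow_const p).aestronglyMeasurable
  have hF_int : Integrable (fun z : ℝ × ℝ => |z.2 - (0:ℝ) * z.1| ^ p) (volume.restrict Ω) := by
    apply Measure.integrableOn_of_bounded (M := 1) hμΩ
      (((measurable_snd.sub (measurable_fst.const_mul 0)).abs).pow_const p).aestronglyMeasurable
    apply ae_restrict_of_forall_mem hΩm
    intro z hz
    rw [Real.norm_eq_abs, abs_of_nonneg (Real.rpow_nonneg (abs_nonneg _) _)]
    apply Real.rpow_le_one (abs_nonneg _) _ (by linarith)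
    simp only [Pi.sub_apply, zero_mul, sub_zero]
    rw [abs_of_pos (hy_pos z hz)]
    exact hy_mem z hz
  have key := hasDerivAt_integral_of_dominated_loc_of_lip
      (μ := volume.restrict Ω)
      (F := fun (t : ℝ) (z : ℝ × ℝ) => |z.2 - t * z.1| ^ p)
      (F' := fun z : ℝ × ℝ => -z.1 * p * z.2 ^ (p - 1))
      (x₀ := (0:ℝ)) (s := Metric.ball (0:ℝ) (1 / b)) (bound := fun _ => p * 2 ^ (p - 1) * b)
      (Metric.ball_mem_nhds _ (by positivity))
      (Filter.Eventually.of_forall hmeas)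
      hF_int
      ((measurable_fst.neg.mul_const p).mul (measurable_snd.pow_const (p - 1))).aestronglyMeasurable
      ?_ ?_ ?_
  · obtain ⟨hF'_int, hderiv⟩ := key
    rw [hderiv.deriv]
    have hRHS : (∫ z in Ω, (|z.2| ^ γ) ^ 2) = ∫ z in Ω, |z.2| ^ p := by simp only [hQ]
    rw [hRHS, ← integral_const_mul]
    have hg_int : IntegrableOn (fun z : ℝ × ℝ => -a * |z.2| ^ p) Ω := by
      have h0 : Integrable (fun z : ℝ × ℝ => |z.2| ^ p) (volume.restrict Ω) := by
        simpa using hF_int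
      exact h0.const_mul (-a)
    apply setIntegral_mono_on hF'_int hg_int hΩm
    intro z hz
    have hy := hy_pos z hz
    have hy1 := hy_mem z hz
    have hx1 := (hx_mem z hz).1
    rw [abs_of_pos hy]
    have e1 : z.2 ^ p ≤ z.2 ^ (p - 1) :=
      Real.rpow_le_rpow_of_exponent_ge hy hy1 (by linarith)
    have e0 : (0:ℝ) ≤ z.2 ^ (p - 1) := Real.rpow_nonneg hy.le _
    nlinarith [mul_le_mul_of_nonneg_right hx1 e0, mul_le_mul_of_nonneg_left e1 ha.le,
      mul_nonneg (mul_nonneg (le_trans ha.le hx1) e0) (by linarith : (0:ℝ) ≤ p - 1)]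
  · -- Lipschitz bound
    apply ae_restrict_of_forall_mem hΩm
    intro z hz
    have hx := hx_mem z hz
    have hy := hy_pos z hz
    have hy1 := hy_mem z hz
    rw [lipschitzOnWith_iff_dist_le_mul]
    intro t1 ht1 t2 ht2
    have hL := abs_rpow_lip p hp
    rw [lipschitzOnWith_iff_dist_le_mul] at hL
    have hmem : ∀ t : ℝ, t ∈ Metric.ball (0:ℝ) (1 / b) → z.2 - t * z.1 ∈ Set.Icc (-2:ℝ) 2 := by
      intro t ht
      rw [Metric.mem_ball, Real.dist_eq, sub_zero] at ht
      have hza : |z.1| ≤ b := abs_le.2 ⟨by linarith [hx.1], hx.2⟩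
      have h1 : |t * z.1| ≤ 1 := by
        rw [abs_mul]
        calc |t| * |z.1| ≤ (1 / b) * b :=
              mul_le_mul ht.le hza (abs_nonneg _) (by positivity)
          _ = 1 := by field_simp
      have h2 : |z.2 - t * z.1| ≤ 2 := by
        calc |z.2 - t * z.1| ≤ |z.2| + |t * z.1| := abs_sub _ _
          _ ≤ 1 + 1 := add_le_add (abs_le.2 ⟨by linarith, hy1⟩) h1
          _ = 2 := by norm_num
      exact ⟨by linarith [abs_le.1 h2], (abs_le.1 h2).2⟩
    have h3 := hL _ (hmem t1 ht1) _ (hmem t2 ht2)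
    have hC2 : ((p * 2 ^ (p - 1)).toNNReal : ℝ) = p * 2 ^ (p - 1) :=
      Real.coe_toNNReal _ (by positivity)
    have hK : ((Real.nnabs (p * 2 ^ (p - 1) * b)) : ℝ) = p * 2 ^ (p - 1) * b := by
      rw [Real.coe_nnabs, abs_of_nonneg (by positivity)]
    rw [hC2] at h3
    rw [hK]
    have hdist : dist (z.2 - t1 * z.1) (z.2 - t2 * z.1) = |z.1| * dist t1 t2 := by
      rw [Real.dist_eq, Real.dist_eq]
      rw [show z.2 - t1 * z.1 - (z.2 - t2 * z.1) = z.1 * (t2 - t1) by ring, abs_mul]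
      rw [abs_sub_comm t2 t1]
    have hza : |z.1| ≤ b := abs_le.2 ⟨by linarith [hx.1], hx.2⟩
    have hpos : (0:ℝ) ≤ p * 2 ^ (p - 1) := by positivity
    calc dist (|z.2 - t1 * z.1| ^ p) (|z.2 - t2 * z.1| ^ p)
        ≤ p * 2 ^ (p - 1) * (|z.1| * dist t1 t2) := by rw [← hdist]; exact h3
      _ ≤ p * 2 ^ (p - 1) * b * dist t1 t2 := by
          nlinarith [dist_nonneg (x := t1) (y := t2),
            mul_le_mul_of_nonneg_right hza (dist_nonneg (x := t1) (y := t2))]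
  · -- bound integrable
    exact (integrableOn_const (lt_of_le_of_lt (measure_mono hΩ)
      ((isCompact_Icc.prod isCompact_Icc).measure_lt_top)).ne :
      IntegrableOn (fun _ : ℝ × ℝ => p * 2 ^ (p - 1) * b) Ω volume)
  · -- pointwise derivative
    apply ae_restrict_of_forall_mem hΩm
    intro z hz
    have hy := hy_pos z hz
    have hlin : HasDerivAt (fun t : ℝ => z.2 - t * z.1) (-z.1) 0 := by
      simpa using ((hasDerivAt_id (0:ℝ)).mul_const z.1).const_sub z.2
    have h1 : HasDerivAt (fun t : ℝ => (z.2 - t * z.1) ^ p) (-z.1 * p * z.2 ^ (p - 1)) 0 := by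
      have := hlin.rpow_const (p := p) (Or.inr hp)
      simpa using this
    apply h1.congr_of_eventuallyEq
    have hcont : Continuous fun t : ℝ => z.2 - t * z.1 := by fun_prop
    have hten : Filter.Tendsto (fun t : ℝ => z.2 - t * z.1) (nhds 0) (nhds z.2) := by
      simpa using hcont.tendsto 0
    have hev : ∀ᶠ t in nhds (0:ℝ), 0 < z.2 - t * z.1 :=
      hten.eventually (eventually_gt_nhds hy)
    filter_upwards [hev] with t ht
    rw [abs_of_pos ht]
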